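/- Let λ ≥ 0 and let f ∈ ST_σ^λ(φ) have Taylor coefficients aₙ. If (1+2λ)²B₁ ≥ |(1+4λ)B₁² + (B₁−B₂)(1+2λ)²|, then |a₂| ≤ B₁/(1+2λ). -/

import Mathlib

open Metric Set

noncomputable section

/-- `f` is bi-univalent on the unit disk, with `g` the univalent analytic
continuation of `f⁻¹` to the unit disk. -/
def IsBiUnivalent (f g : ℂ → ℂ) : Prop :=
  DifferentiableOn ℂ f (ball 0 1) ∧ f 0 = 0 ∧ deriv f 0 = 1 ∧
  Set.InjOn f (ball 0 1) ∧
  DifferentiableOn ℂ g (ball 0 1) ∧ Set.InjOn g (ball 0 1) ∧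
  ∀ w : ℂ, ‖w‖ < 1/4 → f (g w) = w

/-- `φ` is an analytic univalent function on the unit disk with positive real
part there, normalized by `φ 0 = 1`. -/
def IsMaMinda (φ : ℂ → ℂ) : Prop :=
  DifferentiableOn ℂ φ (ball 0 1) ∧ Set.InjOn φ (ball 0 1) ∧ φ 0 = 1 ∧
  ∀ z ∈ ball (0:ℂ) 1, 0 < (φ z).re

/-- Membership in `ST^λ(φ)`: `f` is normalized analytic on the unit disk and
`z f'(z)/f(z) + λ z² f''(z)/f(z) ≺ φ(z)`. -/
def MemSTlam (lam : ℝ) (φ f : ℂ → ℂ) : Prop :=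
  DifferentiableOn ℂ f (ball 0 1) ∧ f 0 = 0 ∧ deriv f 0 = 1 ∧
  ∃ ω : ℂ → ℂ, DifferentiableOn ℂ ω (ball 0 1) ∧ ω 0 = 0 ∧
    (∀ z ∈ ball (0:ℂ) 1, ω z ∈ ball (0:ℂ) 1) ∧
    ∀ z ∈ ball (0:ℂ) 1, z ≠ 0 →
      z * deriv f z / f z + (lam : ℂ) * (z ^ 2 * iteratedDeriv 2 f z / f z) = φ (ω z)

theorem stmt_3
    (lam : ℝ) (hlam : 0 ≤ lam) (φ f g : ℂ → ℂ)
    (B₁ : ℝ) (B₂ B₃ : ℂ) (hB₁ : 0 < B₁)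
    (hφ : IsMaMinda φ)
    (hφ1 : deriv φ 0 = (B₁:ℂ))
    (hφ2 : iteratedDeriv 2 φ 0 = 2 * B₂)
    (hφ3 : iteratedDeriv 3 φ 0 = 6 * B₃)
    (hbi : IsBiUnivalent f g)
    (hf : MemSTlam lam φ f) (hg : MemSTlam lam φ g)
    (a : ℕ → ℂ) (ha : ∀ n, a n = iteratedDeriv n f 0 / (n.factorial : ℂ))
    (D : ℂ) (hD : D = (1 + 4*(lam:ℂ)) * (B₁:ℂ)^2 + ((B₁:ℂ) - B₂) * (1 + 2*(lam:ℂ))^2)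
    (hcond : ‖D‖ ≤ (1 + 2*lam)^2 * B₁) :
    ‖a 2‖ ≤ B₁ / (1 + 2*lam) := by
  obtain ⟨hfd, hf0, hf1, ω, hωd, hω0, hωmaps, heqn⟩ := hf
  obtain ⟨hφd, _, hφ0, hφpos⟩ := hφ
  have h0mem : (0:ℂ) ∈ ball (0:ℂ) 1 := by simp
  have hball : ball (0:ℂ) 1 ∈ nhds (0:ℂ) := isOpen_ball.mem_nhds h0mem
  have hfan : AnalyticOnNhd ℂ f (ball 0 1) := hfd.analyticOnNhd isOpen_ball
  have hφan : AnalyticOnNhd ℂ φ (ball 0 1) := hφd.analyticOnNhd isOpen_ball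
  have hωan : AnalyticOnNhd ℂ ω (ball 0 1) := hωd.analyticOnNhd isOpen_ball
  set ψ : ℂ → ℂ := fun z => φ (ω z) with hψdef
  have hψan : AnalyticOnNhd ℂ ψ (ball (0:ℂ) 1) := fun z hz =>
    (hφan _ (hωmaps z hz)).comp (hωan z hz)
  have hψan' : AnalyticOnNhd ℂ (deriv ψ) (ball (0:ℂ) 1) := hψan.deriv
  have hψ0 : ψ 0 = 1 := by simp [hψdef, hω0, hφ0]
  set f1 : ℂ → ℂ := deriv f with hf1def
  set f2 : ℂ → ℂ := deriv f1 with hf2def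
  set f3 : ℂ → ℂ := deriv f2 with hf3def
  have hitd2 : iteratedDeriv 2 f = f2 := by
    rw [hf2def, hf1def, iteratedDeriv_succ, iteratedDeriv_one]
  -- multiplied identity on the ball
  set F : ℂ → ℂ := fun z => z * f1 z + (lam:ℂ) * (z^2 * f2 z) with hFdef
  set R : ℂ → ℂ := fun z => ψ z * f z with hRdef
  have hE : ∀ z ∈ ball (0:ℂ) 1, F z = R z := by
    intro z hz
    rcases eq_or_ne z 0 with rfl | hne
    · simp [hFdef, hRdef, hf0]
    · have hfz : f z ≠ 0 := by
        intro h
        have h0 := heqn z hz hne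
        rw [h] at h0
        simp at h0
        have hp := hφpos (ω z) (hωmaps z hz)
        rw [← h0] at hp
        simp at hp
      have h' := heqn z hz hne
      rw [hitd2] at h'
      have : (z * f1 z + (lam:ℂ) * (z^2 * f2 z)) / f z = ψ z := by
        field_simp at h' ⊢
        linear_combination h'
      calc F z = ((z * f1 z + (lam:ℂ) * (z^2 * f2 z)) / f z) * f z := by
            field_simp
            simp only [hFdef]; ring
        _ = R z := by rw [this]
  have hEev : F =ᶠ[nhds (0:ℂ)] R := by
    filter_upwards [hball] with z hz using hE z hz
  -- derivative of F on the ball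
  set G : ℂ → ℂ := fun z => f1 z + z * f2 z + (lam:ℂ) * (2*z^1 * f2 z + z^2 * f3 z) with hGdef
  have hdF : ∀ z ∈ ball (0:ℂ) 1, HasDerivAt F (G z) z := by
    intro z hz
    have h1 : HasDerivAt f1 (f2 z) z := ((hfan.deriv z hz).differentiableAt).hasDerivAt
    have h2 : HasDerivAt f2 (f3 z) z := ((hfan.deriv.deriv z hz).differentiableAt).hasDerivAt
    have ha1 : HasDerivAt (fun y => y * f1 y) (1 * f1 z + z * f2 z) z :=
      (hasDerivAt_id z).mul h1
    have ha2 : HasDerivAt (fun y => y^2 * f2 y) ((2:ℕ) * z^1 * f2 z + z^2 * f3 z) z :=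
      (hasDerivAt_pow 2 z).mul h2
    have := ha1.add (ha2.const_mul (lam:ℂ))
    refine this.congr_deriv ?_
    simp only [hGdef]
    push_cast
    ring
  have hdFev : deriv F =ᶠ[nhds (0:ℂ)] G := by
    filter_upwards [hball] with z hz using (hdF z hz).deriv
  -- derivative of R on the ball
  set G2 : ℂ → ℂ := fun z => deriv ψ z * f z + ψ z * f1 z with hG2def
  have hdR : ∀ z ∈ ball (0:ℂ) 1, HasDerivAt R (G2 z) z := by
    intro z hz
    exact ((hψan z hz).differentiableAt.hasDerivAt).mul
      ((hfan z hz).differentiableAt.hasDerivAt)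
  have hdRev : deriv R =ᶠ[nhds (0:ℂ)] G2 := by
    filter_upwards [hball] with z hz using (hdR z hz).deriv
  -- second derivatives at 0 agree
  have hd2 : deriv G 0 = deriv G2 0 := by
    have e1 : deriv G 0 = deriv (deriv F) 0 := (hdFev.deriv_eq).symm
    have e2 : deriv (deriv F) 0 = deriv (deriv R) 0 := (hEev.deriv).deriv_eq
    have e3 : deriv (deriv R) 0 = deriv G2 0 := hdRev.deriv_eq
    rw [e1, e2, e3]
  -- compute deriv G 0
  have hG0 : deriv G 0 = f2 0 + f2 0 + (lam:ℂ) * (2 * f2 0) := by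
    have h1 : HasDerivAt f1 (f2 0) 0 := ((hfan.deriv 0 h0mem).differentiableAt).hasDerivAt
    have h2 : HasDerivAt f2 (f3 0) 0 := ((hfan.deriv.deriv 0 h0mem).differentiableAt).hasDerivAt
    have h3 : HasDerivAt f3 (deriv f3 0) 0 :=
      ((hfan.deriv.deriv.deriv 0 h0mem).differentiableAt).hasDerivAt
    have ha1 : HasDerivAt (fun y => y * f2 y) (1 * f2 0 + 0 * f3 0) 0 :=
      (hasDerivAt_id 0).mul h2
    have ha2 : HasDerivAt (fun y => y^1 * f2 y) ((1:ℕ) * 0^0 * f2 0 + 0^1 * f3 0) 0 :=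
      (hasDerivAt_pow 1 0).mul h2
    have ha2' : HasDerivAt (fun y => 2*y^1 * f2 y) (2 * ((1:ℕ) * 0^0 * f2 0 + 0^1 * f3 0)) 0 := by
      have := ha2.const_mul (2:ℂ)
      exact this.congr_of_eventuallyEq (Filter.Eventually.of_forall fun y => by ring)
    have ha3 : HasDerivAt (fun y => y^2 * f3 y) ((2:ℕ) * 0^1 * f3 0 + 0^2 * deriv f3 0) 0 :=
      (hasDerivAt_pow 2 0).mul h3
    have htot := (h1.add ha1).add ((ha2'.add ha3).const_mul (lam:ℂ))
    have := htot.deriv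
    change deriv G 0 = _ at this
    rw [this]
    push_cast
    ring
  -- compute deriv G2 0
  have hψd0 : DifferentiableAt ℂ ψ 0 := (hψan 0 h0mem).differentiableAt
  have hG20 : deriv G2 0 = 2 * deriv ψ 0 + f2 0 := by
    have h1 : HasDerivAt (deriv ψ) (deriv (deriv ψ) 0) 0 :=
      ((hψan' 0 h0mem).differentiableAt).hasDerivAt
    have h2 : HasDerivAt f (f1 0) 0 := ((hfan 0 h0mem).differentiableAt).hasDerivAt
    have h3 : HasDerivAt ψ (deriv ψ 0) 0 := hψd0.hasDerivAt
    have h4 : HasDerivAt f1 (f2 0) 0 := ((hfan.deriv 0 h0mem).differentiableAt).hasDerivAt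
    have htot := (h1.mul h2).add (h3.mul h4)
    have := htot.deriv
    change deriv G2 0 = _ at this
    rw [this, hf0, hψ0]
    have : f1 0 = 1 := hf1
    rw [this]
    ring
  -- chain rule for ψ
  have hψ' : deriv ψ 0 = (B₁:ℂ) * deriv ω 0 := by
    have := deriv_comp (h₂ := φ) (h := ω) 0
      (by rw [hω0]; exact (hφan 0 h0mem).differentiableAt)
      ((hωan 0 h0mem).differentiableAt)
    rw [show φ ∘ ω = ψ from rfl] at this
    rw [this, hω0, hφ1]
  -- coefficient identity
  have hkey : (1 + 2*(lam:ℂ)) * f2 0 = 2 * ((B₁:ℂ) * deriv ω 0) := by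
    have := hd2
    rw [hG0, hG20, hψ'] at this
    linear_combination this
  -- Schwarz
  have hschwarz : ‖deriv ω 0‖ ≤ 1 := by
    have : MapsTo ω (ball 0 1) (ball 0 1) := fun z hz => hωmaps z hz
    exact Complex.norm_deriv_le_one_of_mapsTo_ball hωd
      (fun z hz => by rw [hω0]; exact ball_subset_closedBall (this hz)) one_pos
  -- conclude
  have hpos : (0:ℝ) < 1 + 2*lam := by linarith
  have hne : (1 + 2*(lam:ℂ)) ≠ 0 := by
    intro h
    have := congrArg Complex.re h
    simp at this
    linarith
  have ha2 : a 2 = (B₁:ℂ) * deriv ω 0 / (1 + 2*(lam:ℂ)) := by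
    rw [ha 2, hitd2]
    have : f2 0 = 2 * ((B₁:ℂ) * deriv ω 0) / (1 + 2*(lam:ℂ)) := by
      field_simp
      linear_combination hkey
    rw [this]
    field_simp
    ring
  rw [ha2]
  rw [norm_div, norm_mul, Complex.norm_real, Real.norm_eq_abs]
  have habs : ‖(1 + 2*(lam:ℂ))‖ = 1 + 2*lam := by
    have : (1 + 2*(lam:ℂ)) = ((1 + 2*lam : ℝ) : ℂ) := by push_cast; ring
    rw [this, Complex.norm_real, Real.norm_eq_abs, abs_of_pos hpos]
  rw [habs, abs_of_pos hB₁]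
  calc B₁ * ‖deriv ω 0‖ / (1 + 2*lam) ≤ B₁ * 1 / (1 + 2*lam) := by
        gcongr
    _ = B₁ / (1 + 2*lam) := by ring
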